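/- Assume $f_\star$ is invariant (its risk $\mathcal{R}(P, f_\star) = E_P[(Y - f_\star(X))^2]$ is the same finite constant $\rho$ for all $P \in \mathcal{P}_0$) and that $\inf_{P \in \mathcal{P}_0} E_P[(f_\star(X) - E_P[Y \mid X])^2] = 0$. Then $\sup_{P \in \mathcal{P}_0} \mathcal{R}(P, f_\star) = \inf_{f \in \mathcal{F}} \sup_{P \in \mathcal{P}_0} \mathcal{R}(P, f)$, where $\mathcal{F}$ is any class of measurable functions containing $f_\star$ and $E_P[Y^2] < \infty$ for all $P$. -/

import Mathlib

open MeasureTheory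
open scoped ENNReal

/-- The risk of a prediction function `f` under a joint distribution `P` of `(X, Y)`. -/
noncomputable def risk {p : ℕ} (P : Measure ((Fin p → ℝ) × ℝ))
    (f : (Fin p → ℝ) → ℝ) : ℝ≥0∞ :=
  ∫⁻ ω, ENNReal.ofReal ((ω.2 - f ω.1) ^ 2) ∂P

/-- The expected squared distance between `f⋆(X)` and the conditional mean `E_P[Y|X]`. -/
noncomputable def gap {p : ℕ} (P : Measure ((Fin p → ℝ) × ℝ))
    (fstar : (Fin p → ℝ) → ℝ) : ℝ≥0∞ :=
  ∫⁻ ω, ENNReal.ofReal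
    ((fstar ω.1 -
      (P[fun ω : (Fin p → ℝ) × ℝ => ω.2 |
        MeasurableSpace.comap Prod.fst inferInstance]) ω) ^ 2) ∂P


section aux
variable {α : Type*} {m0 : MeasurableSpace α} {μ : Measure α}

lemma integrable_mul_of_memL2 {f g : α → ℝ} (hf : MemLp f 2 μ) (hg : MemLp g 2 μ) :
    Integrable (fun x => f x * g x) μ := by
  have h1 := (hf.add hg).integrable_sq
  have h2 := hf.integrable_sq
  have h3 := hg.integrable_sq
  have heq : (fun x => f x * g x) = fun x => (((f x + g x) ^ 2 - f x ^ 2) - g x ^ 2) / 2 := by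
    funext x; ring
  rw [heq]
  exact ((h1.sub h2).sub h3).div_const 2

lemma memL2_of_lintegral_sq_ne_top {f : α → ℝ} (hf : AEStronglyMeasurable f μ)
    (h : ∫⁻ x, ENNReal.ofReal (f x ^ 2) ∂μ ≠ ⊤) : MemLp f 2 μ := by
  rw [memLp_two_iff_integrable_sq hf]
  constructor
  · have := hf.mul hf
    simp only [sq]; exact this
  · rw [hasFiniteIntegral_iff_ofReal (Filter.Eventually.of_forall fun x => sq_nonneg _)]
    exact h.lt_top

lemma lintegral_sq_eq_ofReal {f : α → ℝ} (hf : MemLp f 2 μ) :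
    ∫⁻ x, ENNReal.ofReal (f x ^ 2) ∂μ = ENNReal.ofReal (∫ x, f x ^ 2 ∂μ) :=
  (ofReal_integral_eq_lintegral_ofReal hf.integrable_sq
    (Filter.Eventually.of_forall fun x => sq_nonneg _)).symm

lemma cross_zero {m : MeasurableSpace α} (hm : m ≤ m0) [IsFiniteMeasure μ]
    {Y h : α → ℝ} (hY : MemLp Y 2 μ) (hM : MemLp (μ[Y|m]) 2 μ)
    (hhm : StronglyMeasurable[m] h) (hh : MemLp h 2 μ) :
    ∫ x, (Y x - (μ[Y|m]) x) * h x ∂μ = 0 := by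
  haveI : SigmaFinite (μ.trim hm) := inferInstance
  have hint1 : Integrable (fun x => h x * Y x) μ := integrable_mul_of_memL2 hh hY
  have hint2 : Integrable (fun x => h x * (μ[Y|m]) x) μ := integrable_mul_of_memL2 hh hM
  have hYe : Integrable Y μ := hY.integrable one_le_two
  have key : ∫ x, h x * Y x ∂μ = ∫ x, h x * (μ[Y|m]) x ∂μ := by
    have h1 : ∫ x, (μ[fun x => h x * Y x|m]) x ∂μ = ∫ x, h x * Y x ∂μ := integral_condExp hm
    have h2 : μ[(fun x => h x * Y x)|m] =ᵐ[μ] fun x => h x * (μ[Y|m]) x :=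
      condExp_mul_of_stronglyMeasurable_left hhm hint1 hYe
    rw [← h1, integral_congr_ae h2]
  have heq : ∫ x, (Y x - (μ[Y|m]) x) * h x ∂μ
      = ∫ x, h x * Y x ∂μ - ∫ x, h x * (μ[Y|m]) x ∂μ := by
    rw [← integral_sub hint1 hint2]
    congr 1; funext x; ring
  rw [heq, key, sub_self]

lemma sq_expand {W h : α → ℝ} (hW : MemLp W 2 μ) (hh : MemLp h 2 μ)
    (hc : ∫ x, W x * h x ∂μ = 0) :
    ∫ x, (W x + h x) ^ 2 ∂μ = ∫ x, W x ^ 2 ∂μ + ∫ x, h x ^ 2 ∂μ := by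
  have h1 := hW.integrable_sq
  have h2 := hh.integrable_sq
  have h3 := integrable_mul_of_memL2 hW hh
  have heq : (fun x => (W x + h x) ^ 2)
      = fun x => W x ^ 2 + (2 * (W x * h x) + h x ^ 2) := by
    funext x; ring
  have h4 : Integrable (fun x => 2 * (W x * h x) + h x ^ 2) μ := (h3.const_mul 2).add h2
  have h5 : Integrable (fun x => 2 * (W x * h x)) μ := h3.const_mul 2
  rw [heq, integral_add h1 h4, integral_add h5 h2, MeasureTheory.integral_const_mul, hc]
  ring
end aux

lemma lintegral_risk_le {α : Type*} {m0 : MeasurableSpace α} (μ : Measure α)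
    [IsProbabilityMeasure μ] {m : MeasurableSpace α} (hm : m ≤ m0) {Y fX gX : α → ℝ}
    (hY : MemLp Y 2 μ) (hfm : StronglyMeasurable[m] fX) (hgm : StronglyMeasurable[m] gX)
    (hrfs : ∫⁻ x, ENNReal.ofReal ((Y x - fX x) ^ 2) ∂μ ≠ ⊤) :
    ∫⁻ x, ENNReal.ofReal ((Y x - fX x) ^ 2) ∂μ
      ≤ (∫⁻ x, ENNReal.ofReal ((Y x - gX x) ^ 2) ∂μ)
        + ∫⁻ x, ENNReal.ofReal ((fX x - (μ[Y|m]) x) ^ 2) ∂μ := by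
  classical
  by_cases hgap : ∫⁻ x, ENNReal.ofReal ((fX x - (μ[Y|m]) x) ^ 2) ∂μ = ⊤
  · rw [hgap, add_top]; exact le_top
  by_cases hrg : ∫⁻ x, ENNReal.ofReal ((Y x - gX x) ^ 2) ∂μ = ⊤
  · rw [hrg, top_add]; exact le_top
  set M : α → ℝ := μ[Y|m] with hMdef
  have hMsm : StronglyMeasurable[m] M := stronglyMeasurable_condExp
  have hf0 : @AEStronglyMeasurable _ _ _ m0 m0 fX μ := (hfm.mono hm).aestronglyMeasurable
  have hg0 : @AEStronglyMeasurable _ _ _ m0 m0 gX μ := (hgm.mono hm).aestronglyMeasurable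
  have hM0 : @AEStronglyMeasurable _ _ _ m0 m0 M μ := (hMsm.mono hm).aestronglyMeasurable
  have hEf : MemLp (fun x => Y x - fX x) 2 μ :=
    memL2_of_lintegral_sq_ne_top (hY.aestronglyMeasurable.sub hf0) hrfs
  have hEg : MemLp (fun x => Y x - gX x) 2 μ :=
    memL2_of_lintegral_sq_ne_top (hY.aestronglyMeasurable.sub hg0) hrg
  have hGap : MemLp (fun x => fX x - M x) 2 μ :=
    memL2_of_lintegral_sq_ne_top (hf0.sub hM0) hgap
  have hfX : MemLp fX 2 μ := by
    have h : MemLp (fun x => Y x - (Y x - fX x)) 2 μ := hY.sub hEf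
    have he : (fun x => Y x - (Y x - fX x)) = fX := by funext x; ring
    rwa [he] at h
  have hgX : MemLp gX 2 μ := by
    have h : MemLp (fun x => Y x - (Y x - gX x)) 2 μ := hY.sub hEg
    have he : (fun x => Y x - (Y x - gX x)) = gX := by funext x; ring
    rwa [he] at h
  have hM2 : MemLp M 2 μ := by
    have h : MemLp (fun x => fX x - (fX x - M x)) 2 μ := hfX.sub hGap
    have he : (fun x => fX x - (fX x - M x)) = M := by funext x; ring
    rwa [he] at h
  have hW : MemLp (fun x => Y x - M x) 2 μ := hY.sub hM2
  have decomp : ∀ q : α → ℝ, StronglyMeasurable[m] q → MemLp q 2 μ →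
      ∫ x, (Y x - q x) ^ 2 ∂μ
        = ∫ x, (Y x - M x) ^ 2 ∂μ + ∫ x, (M x - q x) ^ 2 ∂μ := by
    intro q hqm hq2
    have hh2 : MemLp (fun x => M x - q x) 2 μ := hM2.sub hq2
    have hhm : StronglyMeasurable[m] (fun x => M x - q x) := hMsm.sub hqm
    have hc : ∫ x, (Y x - M x) * (M x - q x) ∂μ = 0 := cross_zero hm hY hM2 hhm hh2
    have h1 : (fun x => (Y x - q x) ^ 2)
        = fun x => ((Y x - M x) + (M x - q x)) ^ 2 := by
      funext x; ring
    calc ∫ x, (Y x - q x) ^ 2 ∂μ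
        = ∫ x, ((Y x - M x) + (M x - q x)) ^ 2 ∂μ := by rw [h1]
      _ = ∫ x, (Y x - M x) ^ 2 ∂μ + ∫ x, (M x - q x) ^ 2 ∂μ := sq_expand hW hh2 hc
  have hrf_eq : ∫⁻ x, ENNReal.ofReal ((Y x - fX x) ^ 2) ∂μ
      = ENNReal.ofReal (∫ x, (Y x - M x) ^ 2 ∂μ)
        + ENNReal.ofReal (∫ x, (M x - fX x) ^ 2 ∂μ) := by
    rw [lintegral_sq_eq_ofReal hEf, decomp fX hfm hfX,
      ENNReal.ofReal_add (integral_nonneg fun x => sq_nonneg _)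
        (integral_nonneg fun x => sq_nonneg _)]
  have hgap_eq : ∫⁻ x, ENNReal.ofReal ((fX x - M x) ^ 2) ∂μ
      = ENNReal.ofReal (∫ x, (M x - fX x) ^ 2 ∂μ) := by
    rw [lintegral_sq_eq_ofReal hGap]
    congr 1
    apply integral_congr_ae
    filter_upwards with x
    ring
  have hrg_ge : ENNReal.ofReal (∫ x, (Y x - M x) ^ 2 ∂μ)
      ≤ ∫⁻ x, ENNReal.ofReal ((Y x - gX x) ^ 2) ∂μ := by
    rw [lintegral_sq_eq_ofReal hEg, decomp gX hgm hgX]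
    exact ENNReal.ofReal_le_ofReal
      (le_add_of_nonneg_right (integral_nonneg fun x => sq_nonneg _))
  rw [hrf_eq, hgap_eq]
  exact add_le_add_left hrg_ge _

theorem stmt18 {p : ℕ}
    (Ps : Set (Measure ((Fin p → ℝ) × ℝ)))
    (hPsne : Ps.Nonempty)
    (hprob : ∀ P ∈ Ps, IsProbabilityMeasure P)
    (hY2 : ∀ P ∈ Ps, MemLp (fun ω : (Fin p → ℝ) × ℝ => ω.2) 2 P)
    (Fs : Set ((Fin p → ℝ) → ℝ)) (hFsmeas : ∀ f ∈ Fs, Measurable f)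
    (fstar : (Fin p → ℝ) → ℝ) (hfstar : fstar ∈ Fs)
    (ρ : ℝ≥0∞) (hρ : ρ ≠ ⊤)
    (hinv : ∀ P ∈ Ps, risk P fstar = ρ)
    (hgap : ⨅ P : Ps, gap (P : Measure ((Fin p → ℝ) × ℝ)) fstar = 0) :
    (⨆ P : Ps, risk (P : Measure ((Fin p → ℝ) × ℝ)) fstar) =
      ⨅ f : Fs, ⨆ P : Ps,
        risk (P : Measure ((Fin p → ℝ) × ℝ)) (f : (Fin p → ℝ) → ℝ) := by
  haveI : Nonempty Ps := hPsne.to_subtype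
  have key : ∀ P ∈ Ps, ∀ f ∈ Fs, risk P fstar ≠ ⊤ →
      risk P fstar ≤ risk P f + gap P fstar := by
    intro P hP f hf hfin
    haveI := hprob P hP
    have hfstm : Measurable[MeasurableSpace.comap
        (Prod.fst : (Fin p → ℝ) × ℝ → (Fin p → ℝ)) inferInstance] Prod.fst :=
      Measurable.of_comap_le le_rfl
    have hfm := (hFsmeas fstar hfstar).stronglyMeasurable.comp_measurable hfstm
    have hgm := (hFsmeas f hf).stronglyMeasurable.comp_measurable hfstm
    exact lintegral_risk_le P (by exact measurable_fst.comap_le) (hY2 P hP) hfm hgm hfin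
  have hsup : (⨆ P : Ps, risk (P : Measure ((Fin p → ℝ) × ℝ)) fstar) = ρ := by
    have h : ∀ P : Ps, risk (P : Measure ((Fin p → ℝ) × ℝ)) fstar = ρ :=
      fun P => hinv P P.2
    simp [h]
  refine le_antisymm ?_ ?_
  · rw [hsup]
    refine le_iInf ?_
    rintro ⟨f, hf⟩
    have hle : ∀ P : Ps, ρ ≤ (⨆ Q : Ps, risk (Q : Measure ((Fin p → ℝ) × ℝ)) f)
        + gap (P : Measure ((Fin p → ℝ) × ℝ)) fstar := by
      intro P
      have hfin : risk (P : Measure ((Fin p → ℝ) × ℝ)) fstar ≠ ⊤ := by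
        rw [hinv P P.2]; exact hρ
      have h2 := key P P.2 f hf hfin
      rw [hinv P P.2] at h2
      exact h2.trans (add_le_add_left (le_iSup (fun Q : Ps =>
        risk (Q : Measure ((Fin p → ℝ) × ℝ)) f) P) _)
    have h3 := le_iInf hle
    rwa [← ENNReal.add_iInf, hgap, add_zero] at h3
  · exact iInf_le (fun f : Fs => ⨆ P : Ps,
      risk (P : Measure ((Fin p → ℝ) × ℝ)) (f : (Fin p → ℝ) → ℝ)) ⟨fstar, hfstar⟩
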